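/- Let G be a finite abelian group (written additively) and let z : G → ℚ be a function such that: (i) for all g ∈ G and all integers n, z(n·g) − n²·z(g) ∈ ℤ; and (ii) setting b(g,h) := z(g+h) − z(g) − z(h), for all g, g', h ∈ G one has b(g+g', h) − b(g,h) − b(g',h) ∈ ℤ (so that b is a symmetric bilinear form modulo ℤ). Let K = { g ∈ G : b(g,h) ∈ ℤ for all h ∈ G }. Then the Gauss sum S = Σ_{g ∈ G} exp(2πi·z(g)) satisfies either S = 0 or S^8 = (|K|·|G|)^4; equivalently, S = √(|K|·|G|)·ε where ε is 0 or an eighth root of unity. -/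

import Mathlib

noncomputable section GaussDeloup

open Finset

/-- `exp(2πi x)` for rational `x`. -/
private def ee (x : ℚ) : ℂ := Complex.exp (2 * Real.pi * Complex.I * (x : ℂ))

private def IsIntQ (x : ℚ) : Prop := ∃ m : ℤ, x = (m : ℚ)

private lemma IsIntQ.add {x y : ℚ} (hx : IsIntQ x) (hy : IsIntQ y) : IsIntQ (x + y) := by
  obtain ⟨m, rfl⟩ := hx; obtain ⟨n, rfl⟩ := hy; exact ⟨m + n, by push_cast; ring⟩

private lemma IsIntQ.neg {x : ℚ} (hx : IsIntQ x) : IsIntQ (-x) := by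
  obtain ⟨m, rfl⟩ := hx; exact ⟨-m, by push_cast; ring⟩

private lemma IsIntQ.sub {x y : ℚ} (hx : IsIntQ x) (hy : IsIntQ y) : IsIntQ (x - y) := by
  obtain ⟨m, rfl⟩ := hx; obtain ⟨n, rfl⟩ := hy; exact ⟨m - n, by push_cast; ring⟩

private lemma IsIntQ.intMul {x : ℚ} (n : ℤ) (hx : IsIntQ x) : IsIntQ ((n : ℚ) * x) := by
  obtain ⟨m, rfl⟩ := hx; exact ⟨n * m, by push_cast; ring⟩

private lemma IsIntQ.of_eq {x y : ℚ} (hx : IsIntQ x) (h : y = x) : IsIntQ y := h ▸ hx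

private lemma ee_add (x y : ℚ) : ee (x + y) = ee x * ee y := by
  rw [ee, ee, ee, ← Complex.exp_add]
  congr 1
  push_cast
  ring

private lemma ee_int (m : ℤ) : ee (m : ℚ) = 1 := by
  rw [ee]
  rw [show 2 * (Real.pi : ℂ) * Complex.I * ((m : ℚ) : ℂ)
      = (m : ℤ) * (2 * (Real.pi : ℂ) * Complex.I) by push_cast; ring]
  exact Complex.exp_int_mul_two_pi_mul_I m

private lemma ee_eq_one_iff (x : ℚ) : ee x = 1 ↔ IsIntQ x := by
  constructor
  · intro h
    rw [ee, Complex.exp_eq_one_iff] at h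
    obtain ⟨n, hn⟩ := h
    have hne : (2 * (Real.pi : ℂ) * Complex.I) ≠ 0 :=
      mul_ne_zero (mul_ne_zero two_ne_zero (by exact_mod_cast Real.pi_ne_zero))
        Complex.I_ne_zero
    have : ((x : ℚ) : ℂ) = (n : ℂ) := by
      apply mul_left_cancel₀ hne
      rw [hn]; ring
    exact ⟨n, by exact_mod_cast this⟩
  · rintro ⟨m, rfl⟩; exact ee_int m

private lemma ee_congr {x y : ℚ} (h : IsIntQ (x - y)) : ee x = ee y := by
  obtain ⟨m, hm⟩ := h
  have : x = y + (m : ℚ) := by linarith [hm]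
  rw [this, ee_add, ee_int, mul_one]

private lemma ee_one_of_int {x : ℚ} (h : IsIntQ x) : ee x = 1 := (ee_eq_one_iff x).2 h

private lemma conj_ee (x : ℚ) : (starRingEnd ℂ) (ee x) = ee (-x) := by
  rw [ee, ee, ← Complex.exp_conj]
  congr 1
  rw [map_mul, map_mul, map_mul]
  rw [Complex.conj_I, map_ratCast]
  rw [show (starRingEnd ℂ) 2 = 2 from map_ofNat _ 2,
    show (starRingEnd ℂ) (Real.pi : ℂ) = (Real.pi : ℂ) from Complex.conj_ofReal _]
  push_cast
  ring


section Forms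

variable {G : Type*} [AddCommGroup G]

/-- The associated bilinear form. -/
private def Bq (z : G → ℚ) (g h : G) : ℚ := z (g + h) - z g - z h

private lemma z_zero (z : G → ℚ)
    (h1 : ∀ (g : G) (n : ℤ), ∃ m : ℤ, z (n • g) - (n : ℚ) ^ 2 * z g = m) :
    IsIntQ (z 0) := by
  obtain ⟨m, hm⟩ := h1 0 0
  refine ⟨m, ?_⟩
  rw [← hm, zero_zsmul]
  push_cast
  ring

private lemma B_add_left (z : G → ℚ)
    (h2 : ∀ g g' h : G,
      ∃ m : ℤ, ((z (g + g' + h) - z (g + g') - z h)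
        - (z (g + h) - z g - z h)) - (z (g' + h) - z g' - z h) = m)
    (g g' h : G) : IsIntQ (Bq z (g + g') h - Bq z g h - Bq z g' h) := by
  obtain ⟨m, hm⟩ := h2 g g' h
  exact ⟨m, by rw [← hm]; simp only [Bq]; try ring⟩

private lemma B_symm (z : G → ℚ) (g h : G) : Bq z g h = Bq z h g := by
  simp only [Bq, add_comm g h]; ring

private lemma B_zero_left (z : G → ℚ)
    (h1 : ∀ (g : G) (n : ℤ), ∃ m : ℤ, z (n • g) - (n : ℚ) ^ 2 * z g = m)
    (h : G) : IsIntQ (Bq z 0 h) := by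
  obtain ⟨m, hm⟩ := z_zero z h1
  exact ⟨-m, by simp only [Bq, zero_add, hm]; push_cast; ring⟩

private lemma B_smul_left (z : G → ℚ)
    (h1 : ∀ (g : G) (n : ℤ), ∃ m : ℤ, z (n • g) - (n : ℚ) ^ 2 * z g = m)
    (h2 : ∀ g g' h : G,
      ∃ m : ℤ, ((z (g + g' + h) - z (g + g') - z h)
        - (z (g + h) - z g - z h)) - (z (g' + h) - z g' - z h) = m)
    (n : ℤ) (g h : G) :
    IsIntQ (Bq z (n • g) h - (n : ℚ) * Bq z g h) := by
  induction n using Int.induction_on with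
  | zero =>
    refine (B_zero_left z h1 h).of_eq ?_
    rw [zero_zsmul]; push_cast; try ring
  | succ k ih =>
    have hadd := B_add_left z h2 ((k : ℤ) • g) g h
    have key : ((k : ℤ) + 1) • g = (k : ℤ) • g + g := by rw [add_zsmul, one_zsmul]
    refine (ih.add hadd).of_eq ?_
    rw [key]
    push_cast; ring
  | pred k ih =>
    have hadd := B_add_left z h2 ((-(k : ℤ) - 1) • g) g h
    have key : (-(k : ℤ)) • g = (-(k : ℤ) - 1) • g + g := by
      calc (-(k : ℤ)) • g = ((-(k : ℤ) - 1) + 1) • g := by norm_num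
        _ = (-(k : ℤ) - 1) • g + (1 : ℤ) • g := add_zsmul ..
        _ = (-(k : ℤ) - 1) • g + g := by rw [one_zsmul]
    refine (ih.sub hadd).of_eq ?_
    rw [key]
    push_cast; ring

private lemma B_smul_smul (z : G → ℚ)
    (h1 : ∀ (g : G) (n : ℤ), ∃ m : ℤ, z (n • g) - (n : ℚ) ^ 2 * z g = m)
    (h2 : ∀ g g' h : G,
      ∃ m : ℤ, ((z (g + g' + h) - z (g + g') - z h)
        - (z (g + h) - z g - z h)) - (z (g' + h) - z g' - z h) = m)
    (n m : ℤ) (g h : G) :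
    IsIntQ (Bq z (n • g) (m • h) - ((n : ℚ) * (m : ℚ)) * Bq z g h) := by
  have t1 := B_smul_left z h1 h2 n g (m • h)
  have t2 := (B_smul_left z h1 h2 m h g).intMul n
  refine (t1.add t2).of_eq ?_
  rw [B_symm z g (m • h), B_symm z g h]
  push_cast; ring

/-- quadratic expansion of a 4-term integer linear combination -/
private lemma z_row (z : G → ℚ)
    (h1 : ∀ (g : G) (n : ℤ), ∃ m : ℤ, z (n • g) - (n : ℚ) ^ 2 * z g = m)
    (h2 : ∀ g g' h : G,
      ∃ m : ℤ, ((z (g + g' + h) - z (g + g') - z h)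
        - (z (g + h) - z g - z h)) - (z (g' + h) - z g' - z h) = m)
    (n₁ n₂ n₃ n₄ : ℤ) (x₁ x₂ x₃ x₄ : G) :
    IsIntQ (z (n₁ • x₁ + n₂ • x₂ + n₃ • x₃ + n₄ • x₄)
      - ((n₁ : ℚ) ^ 2 * z x₁ + (n₂ : ℚ) ^ 2 * z x₂ + (n₃ : ℚ) ^ 2 * z x₃
          + (n₄ : ℚ) ^ 2 * z x₄
        + (n₁ : ℚ) * n₂ * Bq z x₁ x₂ + (n₁ : ℚ) * n₃ * Bq z x₁ x₃
        + (n₁ : ℚ) * n₄ * Bq z x₁ x₄ + (n₂ : ℚ) * n₃ * Bq z x₂ x₃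
        + (n₂ : ℚ) * n₄ * Bq z x₂ x₄ + (n₃ : ℚ) * n₄ * Bq z x₃ x₄)) := by
  have e4 : z (n₁ • x₁ + n₂ • x₂ + n₃ • x₃ + n₄ • x₄)
      = z (n₁ • x₁) + z (n₂ • x₂) + z (n₃ • x₃) + z (n₄ • x₄)
        + Bq z (n₁ • x₁) (n₂ • x₂) + Bq z (n₁ • x₁ + n₂ • x₂) (n₃ • x₃)
        + Bq z (n₁ • x₁ + n₂ • x₂ + n₃ • x₃) (n₄ • x₄) := by
    simp only [Bq]; ring
  have s3 := B_add_left z h2 (n₁ • x₁) (n₂ • x₂) (n₃ • x₃)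
  have s4a := B_add_left z h2 (n₁ • x₁ + n₂ • x₂) (n₃ • x₃) (n₄ • x₄)
  have s4b := B_add_left z h2 (n₁ • x₁) (n₂ • x₂) (n₄ • x₄)
  have q1 := h1 x₁ n₁; have q2 := h1 x₂ n₂; have q3 := h1 x₃ n₃; have q4 := h1 x₄ n₄
  have q1' : IsIntQ (z (n₁ • x₁) - (n₁ : ℚ) ^ 2 * z x₁) := q1
  have q2' : IsIntQ (z (n₂ • x₂) - (n₂ : ℚ) ^ 2 * z x₂) := q2
  have q3' : IsIntQ (z (n₃ • x₃) - (n₃ : ℚ) ^ 2 * z x₃) := q3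
  have q4' : IsIntQ (z (n₄ • x₄) - (n₄ : ℚ) ^ 2 * z x₄) := q4
  have b12 := B_smul_smul z h1 h2 n₁ n₂ x₁ x₂
  have b13 := B_smul_smul z h1 h2 n₁ n₃ x₁ x₃
  have b14 := B_smul_smul z h1 h2 n₁ n₄ x₁ x₄
  have b23 := B_smul_smul z h1 h2 n₂ n₃ x₂ x₃
  have b24 := B_smul_smul z h1 h2 n₂ n₄ x₂ x₄
  have b34 := B_smul_smul z h1 h2 n₃ n₄ x₃ x₄
  refine ((((((((((((q1'.add q2').add q3').add q4').add b12).add b13).add b14).add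
    b23).add b24).add b34).add s3).add s4a).add s4b).of_eq ?_
  rw [e4]
  ring


private lemma sum_pow_four {G : Type*} [Fintype G] (f : G → ℂ) :
    (∑ g, f g) ^ 4 = ∑ p : G × G × G × G, f p.1 * (f p.2.1 * (f p.2.2.1 * f p.2.2.2)) := by
  simp only [Fintype.sum_prod_type]
  rw [show (∑ g, f g)^4 = (∑ g, f g) * ((∑ g, f g) * ((∑ g, f g) * (∑ g, f g))) by ring]
  simp only [Finset.sum_mul, Finset.mul_sum]
  refine Finset.sum_congr rfl fun a _ => Finset.sum_congr rfl fun b _ =>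
    Finset.sum_congr rfl fun c _ => Finset.sum_congr rfl fun d _ => by ring

set_option maxHeartbeats 2000000 in
private lemma conj_pow_four {G : Type*} [AddCommGroup G] [Fintype G] (z : G → ℚ)
    (h1 : ∀ (g : G) (n : ℤ), ∃ m : ℤ, z (n • g) - (n : ℚ) ^ 2 * z g = m)
    (h2 : ∀ g g' h : G,
      ∃ m : ℤ, ((z (g + g' + h) - z (g + g') - z h)
        - (z (g + h) - z g - z h)) - (z (g' + h) - z g' - z h) = m) :
    (∑ g : G, ee (z g)) ^ 4 = ((starRingEnd ℂ) (∑ g : G, ee (z g))) ^ 4 := by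
  set N : ℕ := Fintype.card G with hN
  have hN1 : 1 ≤ N := Fintype.card_pos
  obtain ⟨a, b, c, e, habcde⟩ := Nat.sum_four_squares (2 * N ^ 2 - 1)
  set D : ℤ := 2 * (N : ℤ) ^ 2 - 1 with hDdef
  set A : ℤ := (a : ℤ) with hA
  set B : ℤ := (b : ℤ) with hB
  set C : ℤ := (c : ℤ) with hC
  set E : ℤ := (e : ℤ) with hE
  have hd : A ^ 2 + B ^ 2 + C ^ 2 + E ^ 2 = D := by
    have h2N : (1 : ℕ) ≤ 2 * N ^ 2 := by nlinarith
    rw [hA, hB, hC, hE, hDdef]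
    have := habcde
    zify [h2N] at this
    push_cast
    linarith
  have hDD : ∀ x : G, (D * D) • x = x := by
    intro x
    have h0 : (N : ℤ) • x = 0 := by
      rw [natCast_zsmul, hN]; exact card_nsmul_eq_zero
    have hrw : D * D = (4 * (N : ℤ) ^ 3 - 4 * (N : ℤ)) * (N : ℤ) + 1 := by
      rw [hDdef]; ring
    rw [hrw, add_zsmul, one_zsmul, mul_zsmul, h0, smul_zero, zero_add]
  set Φ : G × G × G × G → G × G × G × G := fun p =>
    ( A • p.1 + (-B) • p.2.1 + (-C) • p.2.2.1 + (-E) • p.2.2.2,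
      B • p.1 + A • p.2.1 + (-E) • p.2.2.1 + C • p.2.2.2,
      C • p.1 + E • p.2.1 + A • p.2.2.1 + (-B) • p.2.2.2,
      E • p.1 + (-C) • p.2.1 + B • p.2.2.1 + A • p.2.2.2 ) with hPhi
  set Ψ : G × G × G × G → G × G × G × G := fun p =>
    ( (D * A) • p.1 + (D * B) • p.2.1 + (D * C) • p.2.2.1 + (D * E) • p.2.2.2,
      (D * (-B)) • p.1 + (D * A) • p.2.1 + (D * E) • p.2.2.1 + (D * (-C)) • p.2.2.2,
      (D * (-C)) • p.1 + (D * (-E)) • p.2.1 + (D * A) • p.2.2.1 + (D * B) • p.2.2.2,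
      (D * (-E)) • p.1 + (D * C) • p.2.1 + (D * (-B)) • p.2.2.1 + (D * A) • p.2.2.2 ) with hPsi
  have hleft : ∀ p : G × G × G × G, Ψ (Φ p) = p := by
    rintro ⟨p1, p2, p3, p4⟩
    simp only [hPhi, hPsi, Prod.mk.injEq]
    refine ⟨?_, ?_, ?_, ?_⟩
    · conv_rhs => rw [← hDD p1]
      rw [← hd]; module
    · conv_rhs => rw [← hDD p2]
      rw [← hd]; module
    · conv_rhs => rw [← hDD p3]
      rw [← hd]; module
    · conv_rhs => rw [← hDD p4]
      rw [← hd]; module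
  have hright : ∀ p : G × G × G × G, Φ (Ψ p) = p := by
    rintro ⟨p1, p2, p3, p4⟩
    simp only [hPhi, hPsi, Prod.mk.injEq]
    refine ⟨?_, ?_, ?_, ?_⟩
    · conv_rhs => rw [← hDD p1]
      rw [← hd]; module
    · conv_rhs => rw [← hDD p2]
      rw [← hd]; module
    · conv_rhs => rw [← hDD p3]
      rw [← hd]; module
    · conv_rhs => rw [← hDD p4]
      rw [← hd]; module
  have hNsq : ∀ x : G, IsIntQ ((N : ℚ) ^ 2 * z x) := by
    intro x
    have hx : IsIntQ (z ((N : ℤ) • x) - ((N : ℤ) : ℚ) ^ 2 * z x) := h1 x (N : ℤ)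
    have h0 : (N : ℤ) • x = 0 := by
      rw [natCast_zsmul, hN]; exact card_nsmul_eq_zero
    refine ((z_zero z h1).sub hx).of_eq ?_
    rw [h0]; push_cast; ring
  have hdQ : (A : ℚ) ^ 2 + (B : ℚ) ^ 2 + (C : ℚ) ^ 2 + (E : ℚ) ^ 2 = (D : ℚ) := by
    exact_mod_cast hd
  have hDQ : (D : ℚ) = 2 * (N : ℚ) ^ 2 - 1 := by rw [hDdef]; push_cast; ring
  have hz4 : ∀ p : G × G × G × G,
      ee (z (Φ p).1 + z (Φ p).2.1 + z (Φ p).2.2.1 + z (Φ p).2.2.2)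
        = ee (-(z p.1)) * (ee (-(z p.2.1)) * (ee (-(z p.2.2.1)) * ee (-(z p.2.2.2)))) := by
    rintro ⟨p1, p2, p3, p4⟩
    simp only [hPhi]
    rw [← ee_add, ← ee_add, ← ee_add]
    apply ee_congr
    have r1 := z_row z h1 h2 A (-B) (-C) (-E) p1 p2 p3 p4
    have r2 := z_row z h1 h2 B A (-E) C p1 p2 p3 p4
    have r3 := z_row z h1 h2 C E A (-B) p1 p2 p3 p4
    have r4 := z_row z h1 h2 E (-C) B A p1 p2 p3 p4
    have hfour := ((((hNsq p1).add (hNsq p2)).add (hNsq p3)).add (hNsq p4)).intMul 2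
    refine ((((r1.add r2).add r3).add r4).add hfour).of_eq ?_
    push_cast
    linear_combination (z p1 + z p2 + z p3 + z p4) * hdQ
      + (z p1 + z p2 + z p3 + z p4) * hDQ
  have hbij := Equiv.sum_comp (⟨Φ, Ψ, hleft, hright⟩ : (G × G × G × G) ≃ (G × G × G × G))
      (fun p : G × G × G × G => ee (z p.1 + z p.2.1 + z p.2.2.1 + z p.2.2.2))
  simp only [Equiv.coe_fn_mk] at hbij
  have hconjS : (starRingEnd ℂ) (∑ g : G, ee (z g)) = ∑ g : G, ee (-(z g)) := by
    rw [map_sum]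
    exact Finset.sum_congr rfl fun g _ => conj_ee _
  calc (∑ g : G, ee (z g)) ^ 4
      = ∑ p : G × G × G × G, ee (z p.1) * (ee (z p.2.1) * (ee (z p.2.2.1) * ee (z p.2.2.2))) :=
        sum_pow_four _
    _ = ∑ p : G × G × G × G, ee (z p.1 + z p.2.1 + z p.2.2.1 + z p.2.2.2) := by
        refine Finset.sum_congr rfl fun p _ => ?_
        rw [ee_add, ee_add, ee_add]; ring
    _ = ∑ p : G × G × G × G, ee (z (Φ p).1 + z (Φ p).2.1 + z (Φ p).2.2.1 + z (Φ p).2.2.2) :=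
        hbij.symm
    _ = ∑ p : G × G × G × G, ee (-(z p.1)) * (ee (-(z p.2.1)) * (ee (-(z p.2.2.1)) * ee (-(z p.2.2.2)))) :=
        Finset.sum_congr rfl fun p _ => hz4 p
    _ = (∑ g : G, ee (-(z g))) ^ 4 := (sum_pow_four (fun g => ee (-(z g)))).symm
    _ = ((starRingEnd ℂ) (∑ g : G, ee (z g))) ^ 4 := by rw [hconjS]

end Forms

end GaussDeloup

set_option maxHeartbeats 1000000 in
/-- Deloup's lemma on Gauss sums: if `z : G → ℚ` is a quadratic form modulo `ℤ`
on a finite abelian group `G`, with associated bilinear form `b` (mod `ℤ`) and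
kernel `K = ker (ad b)`, then the Gauss sum `S = Σ_g exp(2πi z(g))` satisfies
`S = 0` or `S^8 = (|K| |G|)^4`, i.e. `S = √(|K||G|) ε` with `ε` zero or an
eighth root of unity. -/
theorem gauss_sum_eq_sqrt_mul_eighth_root
    (G : Type*) [AddCommGroup G] [Fintype G]
    (z : G → ℚ)
    (h1 : ∀ (g : G) (n : ℤ), ∃ m : ℤ, z (n • g) - (n : ℚ) ^ 2 * z g = m)
    (h2 : ∀ g g' h : G,
      ∃ m : ℤ, ((z (g + g' + h) - z (g + g') - z h)
        - (z (g + h) - z g - z h)) - (z (g' + h) - z g' - z h) = m) :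
    (∑ g : G, Complex.exp (2 * Real.pi * Complex.I * (z g : ℂ))) = 0 ∨
    (∑ g : G, Complex.exp (2 * Real.pi * Complex.I * (z g : ℂ))) ^ 8 =
      ((Nat.card {g : G | ∀ h : G, ∃ m : ℤ, z (g + h) - z g - z h = m} : ℂ)
        * (Fintype.card G : ℂ)) ^ 4 := by
  classical
  have hSd : (∑ g : G, Complex.exp (2 * Real.pi * Complex.I * (z g : ℂ)))
      = ∑ g : G, ee (z g) := rfl
  rw [hSd]
  set S : ℂ := ∑ g : G, ee (z g) with hS
  set P : G → Prop := fun g => ∀ h : G, ∃ m : ℤ, z (g + h) - z g - z h = (m : ℚ) with hPdef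
  set Kf : Finset G := Finset.univ.filter P with hKf
  have hPIs : ∀ g, P g → ∀ h, IsIntQ (Bq z g h) := fun g hg h => hg h
  -- inner character sums
  have hinnerG : ∀ k, P k → (∑ h : G, ee (Bq z k h)) = (Fintype.card G : ℂ) := by
    intro k hk
    calc (∑ h : G, ee (Bq z k h)) = ∑ _h : G, (1 : ℂ) :=
          Finset.sum_congr rfl fun h _ => ee_one_of_int (hk h)
      _ = (Fintype.card G : ℂ) := by
          rw [Finset.sum_const, nsmul_eq_mul, mul_one, Finset.card_univ]
  have hinner0 : ∀ k, ¬ P k → (∑ h : G, ee (Bq z k h)) = 0 := by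
    intro k hk
    obtain ⟨h₀, hh₀⟩ := not_forall.mp hk
    have hq : ee (Bq z k h₀) ≠ 1 := fun hcon => hh₀ ((ee_eq_one_iff _).mp hcon)
    have hre : (∑ h : G, ee (Bq z k h)) = (∑ h : G, ee (Bq z k h)) * ee (Bq z k h₀) := by
      calc (∑ h : G, ee (Bq z k h))
          = ∑ h : G, ee (Bq z k (h + h₀)) :=
            (Equiv.sum_comp (Equiv.addRight h₀) (fun h => ee (Bq z k h))).symm
        _ = ∑ h : G, ee (Bq z k h) * ee (Bq z k h₀) := by
            refine Finset.sum_congr rfl fun h _ => ?_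
            rw [← ee_add]
            refine ee_congr ((B_add_left z h2 h h₀ k).of_eq ?_)
            rw [B_symm z k (h + h₀), B_symm z k h, B_symm z k h₀]
            ring
        _ = (∑ h : G, ee (Bq z k h)) * ee (Bq z k h₀) := by rw [Finset.sum_mul]
    have hz : (∑ h : G, ee (Bq z k h)) * (1 - ee (Bq z k h₀)) = 0 := by
      linear_combination hre
    rcases mul_eq_zero.mp hz with h' | h'
    · exact h'
    · exact absurd (sub_eq_zero.mp h').symm hq
  -- the main |S|^2 computation
  have hconjS : (starRingEnd ℂ) S = ∑ h : G, ee (-(z h)) := by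
    rw [hS, map_sum]
    exact Finset.sum_congr rfl fun g _ => conj_ee _
  have hmain : S * (starRingEnd ℂ) S = (Fintype.card G : ℂ) * ∑ k ∈ Kf, ee (z k) := by
    calc S * (starRingEnd ℂ) S
        = ∑ g : G, ∑ h : G, ee (z g) * ee (-(z h)) := by
          rw [hS, hconjS, Finset.sum_mul_sum]
      _ = ∑ h : G, ∑ g : G, ee (z g - z h) := by
          rw [Finset.sum_comm]
          refine Finset.sum_congr rfl fun h _ => Finset.sum_congr rfl fun g _ => ?_
          rw [← ee_add]
          congr 1
          ring
      _ = ∑ h : G, ∑ k : G, ee (z (k + h) - z h) := by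
          refine Finset.sum_congr rfl fun h _ => ?_
          exact (Equiv.sum_comp (Equiv.addRight h) (fun g => ee (z g - z h))).symm
      _ = ∑ k : G, ee (z k) * (∑ h : G, ee (Bq z k h)) := by
          rw [Finset.sum_comm]
          refine Finset.sum_congr rfl fun k _ => ?_
          rw [Finset.mul_sum]
          refine Finset.sum_congr rfl fun h _ => ?_
          rw [← ee_add]
          congr 1
          simp only [Bq]
          ring
      _ = ∑ k ∈ Kf, ee (z k) * (∑ h : G, ee (Bq z k h)) := by
          symm
          rw [hKf]
          refine Finset.sum_filter_of_ne ?_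
          intro k _ hne
          by_contra hk
          rw [hinner0 k hk, mul_zero] at hne
          exact hne rfl
      _ = ∑ k ∈ Kf, ee (z k) * (Fintype.card G : ℂ) := by
          refine Finset.sum_congr rfl fun k hk => ?_
          rw [hinnerG k (Finset.mem_filter.mp hk).2]
      _ = (Fintype.card G : ℂ) * ∑ k ∈ Kf, ee (z k) := by
          rw [Finset.mul_sum]
          exact Finset.sum_congr rfl fun k _ => mul_comm _ _
  -- cardinality identification
  have hcardN : Nat.card {g : G | P g} = Kf.card := by
    rw [Nat.card_eq_fintype_card, ← Set.toFinset_card, Set.toFinset_setOf, hKf]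
  by_cases hKint : ∀ k ∈ Kf, IsIntQ (z k)
  · right
    have hT : ∑ k ∈ Kf, ee (z k) = (Kf.card : ℂ) := by
      calc ∑ k ∈ Kf, ee (z k) = ∑ _k ∈ Kf, (1 : ℂ) :=
            Finset.sum_congr rfl fun k hk => ee_one_of_int (hKint k hk)
        _ = (Kf.card : ℂ) := by rw [Finset.sum_const, nsmul_eq_mul, mul_one]
    have hSS : S * (starRingEnd ℂ) S = (Fintype.card G : ℂ) * (Kf.card : ℂ) := by
      rw [hmain, hT]
    have h4 := conj_pow_four z h1 h2
    rw [← hS] at h4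
    have hcardC : ((Nat.card {g : G | P g} : ℕ) : ℂ) = (Kf.card : ℂ) := by
      rw [hcardN]
    calc S ^ 8 = (S * (starRingEnd ℂ) S) ^ 4 := by rw [mul_pow, ← h4]; ring
      _ = ((Nat.card {g : G | P g} : ℂ) * (Fintype.card G : ℂ)) ^ 4 := by
          rw [hSS, hcardC]; ring
  · left
    obtain ⟨k₀, hk₀⟩ := not_forall.mp hKint
    obtain ⟨hk₀m', hk₀i⟩ := _root_.not_imp.mp hk₀
    have hPk₀ : P k₀ := (Finset.mem_filter.mp hk₀m').2
    have h2z : IsIntQ (2 * z k₀) := by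
      have hu : IsIntQ (z ((2 : ℤ) • k₀) - ((2 : ℤ) : ℚ) ^ 2 * z k₀) := h1 k₀ 2
      have hv : IsIntQ (Bq z k₀ k₀) := hPk₀ k₀
      refine (hv.sub hu).of_eq ?_
      simp only [Bq]
      rw [two_zsmul]
      push_cast
      ring
    have hek : ee (z k₀) = -1 := by
      have hsq : ee (z k₀) * ee (z k₀) = 1 := by
        rw [← ee_add]
        exact ee_one_of_int (h2z.of_eq (by ring))
      rcases mul_self_eq_one_iff.mp hsq with h' | h'
      · exact absurd ((ee_eq_one_iff _).mp h') hk₀i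
      · exact h'
    have hPadd : ∀ k, P k → P (k + k₀) := by
      intro k hk h
      have t := B_add_left z h2 k k₀ h
      exact (((hPIs k hk h).add (hPk₀ h)).add t).of_eq (by simp only [Bq]; ring)
    have hPsub : ∀ k, P k → P (k - k₀) := by
      intro k hk h
      have t := B_add_left z h2 (k - k₀) k₀ h
      rw [sub_add_cancel] at t
      exact (((hPIs k hk h).sub (hPk₀ h)).sub t).of_eq (by simp only [Bq]; ring)
    have hTneg : (∑ k ∈ Kf, ee (z k)) = -(∑ k ∈ Kf, ee (z k)) := by
      calc (∑ k ∈ Kf, ee (z k)) = ∑ k ∈ Kf, ee (z (k + k₀)) := by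
            refine Finset.sum_nbij' (fun k => k - k₀) (fun k => k + k₀) ?_ ?_ ?_ ?_ ?_
            · intro k hkm
              rw [hKf, Finset.mem_filter]
              exact ⟨Finset.mem_univ _, hPsub k (Finset.mem_filter.mp hkm).2⟩
            · intro k hkm
              rw [hKf, Finset.mem_filter]
              exact ⟨Finset.mem_univ _, hPadd k (Finset.mem_filter.mp hkm).2⟩
            · intro k _; exact sub_add_cancel k k₀
            · intro k _; exact add_sub_cancel_right k k₀
            · intro k _; rw [sub_add_cancel]
        _ = ∑ k ∈ Kf, (-1) * ee (z k) := by
            refine Finset.sum_congr rfl fun k hkm => ?_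
            have hk : P k := (Finset.mem_filter.mp hkm).2
            calc ee (z (k + k₀)) = ee (z k) * ee (z k₀) := by
                  rw [← ee_add]
                  refine ee_congr ((hPIs k hk k₀).of_eq ?_)
                  simp only [Bq]
                  ring
              _ = (-1) * ee (z k) := by rw [hek]; ring
        _ = -(∑ k ∈ Kf, ee (z k)) := by
            simp only [neg_one_mul]
            exact Finset.sum_neg_distrib _
    have hT0 : (∑ k ∈ Kf, ee (z k)) = 0 := by
      have h2T : (2 : ℂ) * (∑ k ∈ Kf, ee (z k)) = 0 := by linear_combination hTneg
      rcases mul_eq_zero.mp h2T with h' | h'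
      · exact absurd h' two_ne_zero
      · exact h'
    have hSS : S * (starRingEnd ℂ) S = 0 := by rw [hmain, hT0, mul_zero]
    rcases mul_eq_zero.mp hSS with h' | h'
    · exact h'
    · rw [starRingEnd_apply, star_eq_zero] at h'
      exact h'
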